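/- Let f be a univariate polynomial of degree at most 2d whose second derivative is nonnegative on [a,b]. Then there exist sum-of-squares univariate polynomials σ₀, σ₁, σ₂ such that f''(x) = σ₀(x) + (x-a)σ₁(x) + (b-x)σ₂(x) identically. -/

import Mathlib

open Polynomial

lemma mySq (p : ℝ[X]) : IsSumSq (p ^ 2) := by
  rw [sq, ← add_zero (p * p)]; exact IsSumSq.sq_add p IsSumSq.zero

lemma mySqMul {a t : ℝ[X]} (ht : IsSumSq t) : IsSumSq (a * a * t) := by
  induction ht with
  | zero => simpa using IsSumSq.zero
  | @sq_add b T pT ih =>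
    have : a * a * (b * b + T) = (a * b) * (a * b) + a * a * T := by ring
    rw [this]; exact IsSumSq.sq_add _ ih

lemma myMul {s t : ℝ[X]} (hs : IsSumSq s) (ht : IsSumSq t) : IsSumSq (s * t) := by
  induction hs with
  | zero => simpa using IsSumSq.zero
  | @sq_add a S pS ih => rw [add_mul]; exact IsSumSq.add (mySqMul ht) ih

lemma mySqMul' {a t : ℝ[X]} (ht : IsSumSq t) : IsSumSq (a ^ 2 * t) := by
  rw [sq]; exact mySqMul ht

lemma myC {c : ℝ} (hc : 0 ≤ c) : IsSumSq (C c : ℝ[X]) := by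
  have : (C c : ℝ[X]) = C (Real.sqrt c) ^ 2 := by
    rw [← C_pow, sq, Real.mul_self_sqrt hc]
  rw [this]; exact mySq _

def InM (a b : ℝ) (p : ℝ[X]) : Prop :=
  ∃ σ₀ σ₁ σ₂ : Polynomial ℝ, IsSumSq σ₀ ∧ IsSumSq σ₁ ∧ IsSumSq σ₂ ∧
    p = σ₀ + (X - C a) * σ₁ + (C b - X) * σ₂

lemma InM.ofSos {a b : ℝ} {p : ℝ[X]} (hp : IsSumSq p) : InM a b p :=
  ⟨p, 0, 0, hp, IsSumSq.zero, IsSumSq.zero, by ring⟩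

lemma InM.add {a b : ℝ} {p q : ℝ[X]} (hp : InM a b p) (hq : InM a b q) : InM a b (p + q) := by
  obtain ⟨s0, s1, s2, h0, h1, h2, he⟩ := hp
  obtain ⟨t0, t1, t2, g0, g1, g2, ge⟩ := hq
  exact ⟨s0 + t0, s1 + t1, s2 + t2, h0.add g0, h1.add g1, h2.add g2, by rw [he, ge]; ring⟩

lemma InM.sosMul {a b : ℝ} {s p : ℝ[X]} (hs : IsSumSq s) (hp : InM a b p) : InM a b (s * p) := by
  obtain ⟨s0, s1, s2, h0, h1, h2, he⟩ := hp
  exact ⟨s * s0, s * s1, s * s2, myMul hs h0, myMul hs h1, myMul hs h2, by rw [he]; ring⟩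

lemma InM.mulA {a b : ℝ} (hab : a < b) {p : ℝ[X]} (hp : InM a b p) :
    InM a b ((X - C a) * p) := by
  obtain ⟨s0, s1, s2, h0, h1, h2, he⟩ := hp
  set u : ℝ[X] := C (Real.sqrt (b - a)⁻¹) with hu
  have hu2 : u ^ 2 * (C b - C a) = 1 := by
    rw [hu, ← C_pow, ← C_sub, ← C_mul, sq,
      Real.mul_self_sqrt (inv_nonneg.2 (sub_nonneg.2 hab.le)),
      inv_mul_cancel₀ (sub_ne_zero.2 hab.ne'), C_1]
  refine ⟨(X - C a) ^ 2 * s1, s0 + (u * (C b - X)) ^ 2 * s2, (u * (X - C a)) ^ 2 * s2,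
    mySqMul' h1, h0.add (mySqMul' h2), mySqMul' h2, ?_⟩
  rw [he]
  linear_combination (-((X - C a) * (C b - X) * s2)) * hu2

lemma InM.mulB {a b : ℝ} (hab : a < b) {p : ℝ[X]} (hp : InM a b p) :
    InM a b ((C b - X) * p) := by
  obtain ⟨s0, s1, s2, h0, h1, h2, he⟩ := hp
  set u : ℝ[X] := C (Real.sqrt (b - a)⁻¹) with hu
  have hu2 : u ^ 2 * (C b - C a) = 1 := by
    rw [hu, ← C_pow, ← C_sub, ← C_mul, sq,
      Real.mul_self_sqrt (inv_nonneg.2 (sub_nonneg.2 hab.le)),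
      inv_mul_cancel₀ (sub_ne_zero.2 hab.ne'), C_1]
  refine ⟨(C b - X) ^ 2 * s2, (u * (C b - X)) ^ 2 * s1, s0 + (u * (X - C a)) ^ 2 * s1, mySqMul' h2,
    mySqMul' h1, h0.add (mySqMul' h1), ?_⟩
  rw [he]
  linear_combination (-((X - C a) * (C b - X) * s1)) * hu2

lemma eval_nonneg_limit {a b x₀ : ℝ} (hab : a < b) (hx₀ : x₀ ∈ Set.Icc a b) (p : ℝ[X])
    (h : ∀ x ∈ Set.Icc a b, x ≠ x₀ → 0 ≤ p.eval x) : 0 ≤ p.eval x₀ := by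
  obtain ⟨c, hc, hcx⟩ : ∃ c, c ∈ Set.Icc a b ∧ c ≠ x₀ := by
    by_cases h' : x₀ = a
    · exact ⟨b, Set.right_mem_Icc.2 hab.le, fun hb => absurd (h' ▸ hb) hab.ne'⟩
    · exact ⟨a, Set.left_mem_Icc.2 hab.le, fun ha => h' ha.symm⟩
  set u : ℕ → ℝ := fun n => (1 - (1 : ℝ) / (n + 1)) * x₀ + ((1 : ℝ) / (n + 1)) * c with hud
  have hmem : ∀ n, u n ∈ Set.Icc a b := by
    intro n
    have h1 : (0 : ℝ) < 1 / (n + 1) := by positivity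
    have h2 : (1 : ℝ) / (n + 1) ≤ 1 := by
      rw [div_le_one (by positivity)]; linarith [Nat.cast_nonneg (α := ℝ) n]
    obtain ⟨hx1, hx2⟩ := hx₀
    obtain ⟨hc1, hc2⟩ := hc
    have e1 : (0:ℝ) ≤ (1 - 1/((n:ℝ)+1)) * (x₀ - a) :=
      mul_nonneg (by linarith) (by linarith)
    have e2 : (0:ℝ) ≤ (1/((n:ℝ)+1)) * (c - a) := mul_nonneg h1.le (by linarith)
    have e3 : (0:ℝ) ≤ (1 - 1/((n:ℝ)+1)) * (b - x₀) :=
      mul_nonneg (by linarith) (by linarith)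
    have e4 : (0:ℝ) ≤ (1/((n:ℝ)+1)) * (b - c) := mul_nonneg h1.le (by linarith)
    constructor
    · show a ≤ (1 - 1/((n:ℝ)+1)) * x₀ + (1/((n:ℝ)+1)) * c
      nlinarith
    · show (1 - 1/((n:ℝ)+1)) * x₀ + (1/((n:ℝ)+1)) * c ≤ b
      nlinarith
  have hne : ∀ n, u n ≠ x₀ := by
    intro n he
    have h1 : (0 : ℝ) < 1 / (n + 1) := by positivity
    have : (1 : ℝ) / (n + 1) * (c - x₀) = 0 := by rw [hud] at he; linarith [he]
    rcases mul_eq_zero.1 this with h' | h'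
    · exact absurd h' (ne_of_gt h1)
    · exact hcx (by linarith)
  have hlim : Filter.Tendsto u Filter.atTop (nhds x₀) := by
    have h0 : Filter.Tendsto (fun n : ℕ => (1 : ℝ) / (n + 1)) Filter.atTop (nhds 0) :=
      tendsto_one_div_add_atTop_nhds_zero_nat
    have : Filter.Tendsto u Filter.atTop (nhds ((1 - 0) * x₀ + 0 * c)) := by
      exact (((h0.const_sub 1).mul_const x₀).add (h0.mul_const c))
    simpa using this
  have hev : Filter.Tendsto (fun n => p.eval (u n)) Filter.atTop (nhds (p.eval x₀)) :=
    (p.continuous_aeval.tendsto x₀).comp hlim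
  exact ge_of_tendsto' hev fun n => h (u n) (hmem n) (hne n)

lemma deriv_zero_of_interior_min {a b x₀ : ℝ} (hx₀ : x₀ ∈ Set.Ioo a b) (p : ℝ[X])
    (hpos : ∀ x ∈ Set.Icc a b, 0 ≤ p.eval x) (hroot : p.eval x₀ = 0) :
    (derivative p).eval x₀ = 0 := by
  have hmin : IsLocalMin (fun x => p.eval x) x₀ := by
    filter_upwards [(isOpen_Ioo (a := a) (b := b)).mem_nhds hx₀] with x hx
    simp only [hroot]
    exact hpos x (Set.mem_Icc_of_Ioo hx)
  have := hmin.deriv_eq_zero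
  rwa [Polynomial.deriv] at this

lemma exists_quadratic_factor (p : ℝ[X]) (hdeg : 1 ≤ p.natDegree)
    (hnr : ∀ r : ℝ, p.eval r ≠ 0) :
    ∃ t e : ℝ, 0 < e ∧ p = ((X - C t) ^ 2 + C e) * (p /ₘ ((X - C t) ^ 2 + C e)) := by
  have hp0 : p ≠ 0 := fun h => hnr 0 (by simp [h])
  -- a complex root
  have hdegC : 0 < (p.map (algebraMap ℝ ℂ)).degree := by
    rw [degree_map_eq_of_injective (algebraMap ℝ ℂ).injective, degree_eq_natDegree hp0]
    have h1 : 0 < p.natDegree := hdeg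
    exact_mod_cast h1
  obtain ⟨z, hz⟩ := Complex.exists_root hdegC
  have hzroot : aeval z p = 0 := by
    rwa [aeval_def, ← eval_map]
  have him : z.im ≠ 0 := by
    intro h0
    apply hnr z.re
    have : z = (z.re : ℂ) := Complex.ext rfl (by simp [h0])
    rw [this] at hzroot
    have h2 : algebraMap ℝ ℂ (p.eval z.re) = 0 := by
      rw [← aeval_algebraMap_apply_eq_algebraMap_eval]
      exact_mod_cast hzroot
    rw [Complex.coe_algebraMap] at h2
    exact_mod_cast h2
  set q : ℝ[X] := (X - C z.re) ^ 2 + C (z.im ^ 2) with hq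
  have hqmonic : q.Monic := by
    apply Polynomial.Monic.add_of_left
    · exact (monic_X_sub_C z.re).pow 2
    · apply lt_of_le_of_lt (degree_C_le)
      have h2 : ((X - C z.re) ^ 2 : ℝ[X]).degree = 2 := by compute_degree!
      rw [h2]; norm_num
  have hqz : aeval z q = 0 := by
    rw [hq]
    simp only [map_add, map_pow, map_sub, aeval_X, aeval_C, Complex.coe_algebraMap]
    have hz2 : z = (z.re:ℂ) + (z.im:ℂ) * Complex.I := (Complex.re_add_im z).symm
    linear_combination (z - (z.re:ℂ) + (z.im:ℂ) * Complex.I) * hz2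
      + ((z.im:ℂ))^2 * Complex.I_sq
  -- the remainder must vanish
  have hsum := modByMonic_add_div p q
  have hdegr : (p %ₘ q).degree ≤ 1 := by
    have h2 := degree_modByMonic_lt p hqmonic
    have hdq : q.degree = 2 := by
      rw [hq]
      compute_degree!
    rw [hdq] at h2
    exact Order.le_of_lt_succ (by exact_mod_cast h2)
  have hrform := eq_X_add_C_of_degree_le_one hdegr
  have hrz : aeval z (p %ₘ q) = 0 := by
    have := congrArg (aeval z) hsum
    simp only [map_add, map_mul, hqz, hzroot, zero_mul, add_zero] at this
    exact this
  rw [hrform] at hrz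
  simp only [map_add, map_mul, aeval_X, aeval_C] at hrz
  have hc1 : (p %ₘ q).coeff 1 = 0 := by
    have him2 := congrArg Complex.im hrz
    simp [Complex.add_im, Complex.mul_im] at him2
    rcases him2 with h | h
    · exact h
    · exact absurd h him
  have hc0 : (p %ₘ q).coeff 0 = 0 := by
    rw [hc1] at hrz
    have := congrArg Complex.re hrz
    simpa using this
  have hr0 : p %ₘ q = 0 := by rw [hrform, hc1, hc0]; simp
  refine ⟨z.re, z.im ^ 2, by positivity, ?_⟩
  rw [← hq]
  rw [hr0, zero_add] at hsum
  exact hsum.symm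

lemma nonneg_of_mul {c g : ℝ} (h : 0 ≤ c * g) (hc : 0 < c) : 0 ≤ g :=
  le_of_not_gt fun hg => absurd h (not_le.2 (mul_neg_of_pos_of_neg hc hg))

lemma key (a b : ℝ) (hab : a < b) (n : ℕ) :
    ∀ p : ℝ[X], p.natDegree ≤ n → (∀ x ∈ Set.Icc a b, 0 ≤ p.eval x) → InM a b p := by
  induction n with
  | zero =>
    intro p hdeg hpos
    have hc := eq_C_of_natDegree_eq_zero (Nat.le_zero.1 hdeg)
    have h0 : 0 ≤ p.coeff 0 := by
      have := hpos a (Set.left_mem_Icc.2 hab.le)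
      rwa [hc, eval_C] at this
    rw [hc]; exact InM.ofSos (myC h0)
  | succ n ih =>
    intro p hdeg hpos
    by_cases hp0 : p = 0
    · rw [hp0]; exact InM.ofSos IsSumSq.zero
    by_cases hd0 : p.natDegree = 0
    · have hc := eq_C_of_natDegree_eq_zero hd0
      have h0 : 0 ≤ p.coeff 0 := by
        have := hpos a (Set.left_mem_Icc.2 hab.le)
        rwa [hc, eval_C] at this
      rw [hc]; exact InM.ofSos (myC h0)
    by_cases hrootI : ∃ x ∈ Set.Icc a b, p.eval x = 0
    · obtain ⟨x₀, hx₀, hev⟩ := hrootI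
      rcases eq_or_lt_of_le hx₀.1 with hxa | hxa
      · -- x₀ = a
        have heva : p.eval a = 0 := by rw [hxa]; exact hev
        obtain ⟨g, hg⟩ := dvd_iff_isRoot.2 heva
        have hg0 : g ≠ 0 := fun h => hp0 (by rw [hg, h, mul_zero])
        have hdg : g.natDegree ≤ n := by
          have := natDegree_mul (X_sub_C_ne_zero a) hg0
          rw [← hg, natDegree_X_sub_C] at this
          omega
        have hgnn : ∀ x ∈ Set.Icc a b, 0 ≤ g.eval x := by
          have hne : ∀ x ∈ Set.Icc a b, x ≠ a → 0 ≤ g.eval x := by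
            intro x hx hxne
            have h1 : 0 < x - a := sub_pos.2 (lt_of_le_of_ne hx.1 (Ne.symm hxne))
            have h2 : p.eval x = (x - a) * g.eval x := by rw [hg]; simp
            exact nonneg_of_mul (h2 ▸ hpos x hx) h1
          intro x hx
          by_cases hxe : x = a
          · subst hxe; exact eval_nonneg_limit hab (Set.left_mem_Icc.2 hab.le) g hne
          · exact hne x hx hxe
        rw [hg]
        exact InM.mulA hab (ih g hdg hgnn)
      rcases eq_or_lt_of_le hx₀.2 with hxb | hxb
      · -- x₀ = b
        have hevb : p.eval b = 0 := by rw [← hxb]; exact hev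
        obtain ⟨g, hg⟩ := dvd_iff_isRoot.2 hevb
        have hg0 : g ≠ 0 := fun h => hp0 (by rw [hg, h, mul_zero])
        have hdg : g.natDegree ≤ n := by
          have := natDegree_mul (X_sub_C_ne_zero b) hg0
          rw [← hg, natDegree_X_sub_C] at this
          omega
        have hgnn : ∀ x ∈ Set.Icc a b, 0 ≤ (-g).eval x := by
          have hne : ∀ x ∈ Set.Icc a b, x ≠ b → 0 ≤ (-g).eval x := by
            intro x hx hxne
            have h1 : 0 < b - x := sub_pos.2 (lt_of_le_of_ne hx.2 hxne)
            have h2 : p.eval x = (b - x) * (-g).eval x := by rw [hg]; simp; ring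
            exact nonneg_of_mul (h2 ▸ hpos x hx) h1
          intro x hx
          by_cases hxe : x = b
          · subst hxe; exact eval_nonneg_limit hab (Set.right_mem_Icc.2 hab.le) (-g) hne
          · exact hne x hx hxe
        have hdg' : (-g).natDegree ≤ n := by rwa [natDegree_neg]
        have hpg : p = (C b - X) * (-g) := by rw [hg]; ring
        rw [hpg]
        exact InM.mulB hab (ih (-g) hdg' hgnn)
      · -- x₀ interior
        obtain ⟨g, hg⟩ := dvd_iff_isRoot.2 hev
        have hg0 : g ≠ 0 := fun h => hp0 (by rw [hg, h, mul_zero])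
        have hder : (derivative p).eval x₀ = 0 :=
          deriv_zero_of_interior_min ⟨hxa, hxb⟩ p hpos hev
        have hgx₀ : g.eval x₀ = 0 := by
          have hdp : derivative p = g + (X - C x₀) * derivative g := by
            rw [hg, derivative_mul, derivative_sub, derivative_X, derivative_C]
            ring
          have := hder
          rw [hdp] at this
          simpa using this
        obtain ⟨h, hh⟩ := dvd_iff_isRoot.2 hgx₀
        have hph : p = (X - C x₀) ^ 2 * h := by rw [hg, hh]; ring
        have hh0 : h ≠ 0 := fun h0 => hp0 (by rw [hph, h0, mul_zero])
        have hdh : h.natDegree ≤ n := by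
          have hq0 : ((X - C x₀) ^ 2 : ℝ[X]) ≠ 0 := pow_ne_zero 2 (X_sub_C_ne_zero x₀)
          have := natDegree_mul hq0 hh0
          rw [← hph, natDegree_pow, natDegree_X_sub_C] at this
          omega
        have hhnn : ∀ x ∈ Set.Icc a b, 0 ≤ h.eval x := by
          have hne : ∀ x ∈ Set.Icc a b, x ≠ x₀ → 0 ≤ h.eval x := by
            intro x hx hxne
            have h3 : x - x₀ ≠ 0 := sub_ne_zero.2 hxne
            have h1 : 0 < (x - x₀) ^ 2 := by positivity
            have h2 : p.eval x = (x - x₀) ^ 2 * h.eval x := by rw [hph]; simp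
            exact nonneg_of_mul (h2 ▸ hpos x hx) h1
          intro x hx
          by_cases hxe : x = x₀
          · subst hxe; exact eval_nonneg_limit hab hx h hne
          · exact hne x hx hxe
        rw [hph]
        exact InM.sosMul (mySq _) (ih h hdh hhnn)
    · by_cases hroot : ∃ r : ℝ, p.eval r = 0
      · obtain ⟨r, hr⟩ := hroot
        have hrI : r ∉ Set.Icc a b := fun h => hrootI ⟨r, h, hr⟩
        obtain ⟨g, hg⟩ := dvd_iff_isRoot.2 hr
        have hg0 : g ≠ 0 := fun h => hp0 (by rw [hg, h, mul_zero])
        have hdg : g.natDegree ≤ n := by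
          have := natDegree_mul (X_sub_C_ne_zero r) hg0
          rw [← hg, natDegree_X_sub_C] at this
          omega
        rw [Set.mem_Icc, not_and_or, not_le, not_le] at hrI
        rcases hrI with hra | hrb
        · -- r < a
          have hgnn : ∀ x ∈ Set.Icc a b, 0 ≤ g.eval x := by
            intro x hx
            have h1 : 0 < x - r := by linarith [hx.1]
            have h2 : p.eval x = (x - r) * g.eval x := by rw [hg]; simp
            exact nonneg_of_mul (h2 ▸ hpos x hx) h1
          have hsplit : p = (X - C a) * g + C (a - r) * g := by
            rw [hg, C_sub]; ring
          rw [hsplit]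
          exact (InM.mulA hab (ih g hdg hgnn)).add
            (InM.sosMul (myC (by linarith : (0:ℝ) ≤ a - r)) (ih g hdg hgnn))
        · -- b < r
          have hgnn : ∀ x ∈ Set.Icc a b, 0 ≤ (-g).eval x := by
            intro x hx
            have h1 : 0 < r - x := by linarith [hx.2]
            have h2 : p.eval x = (r - x) * (-g).eval x := by rw [hg]; simp; ring
            exact nonneg_of_mul (h2 ▸ hpos x hx) h1
          have hdg' : (-g).natDegree ≤ n := by rwa [natDegree_neg]
          have hsplit : p = (C b - X) * (-g) + C (r - b) * (-g) := by
            rw [hg, C_sub]; ring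
          rw [hsplit]
          exact (InM.mulB hab (ih (-g) hdg' hgnn)).add
            (InM.sosMul (myC (by linarith : (0:ℝ) ≤ r - b)) (ih (-g) hdg' hgnn))
      · -- no real root: quadratic factor
        push_neg at hroot
        obtain ⟨t, e, he, hqf⟩ := exists_quadratic_factor p (by omega) hroot
        set q : ℝ[X] := (X - C t) ^ 2 + C e with hqdef
        set h : ℝ[X] := p /ₘ q with hhdef
        have hq0 : q ≠ 0 := fun h0 => by
          have : q.eval t = 0 := by rw [h0]; simp
          rw [hqdef] at this
          simp at this
          linarith
        have hh0 : h ≠ 0 := fun h0 => hp0 (by rw [hqf, h0, mul_zero])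
        have hqd : q.natDegree = 2 := by rw [hqdef]; compute_degree!
        have hdh : h.natDegree ≤ n := by
          have := natDegree_mul hq0 hh0
          rw [← hqf, hqd] at this
          omega
        have hqpos : ∀ x : ℝ, 0 < q.eval x := by
          intro x
          rw [hqdef]
          simp only [eval_add, eval_pow, eval_sub, eval_X, eval_C]
          have := sq_nonneg (x - t)
          linarith
        have hhnn : ∀ x ∈ Set.Icc a b, 0 ≤ h.eval x := by
          intro x hx
          have h2 : p.eval x = q.eval x * h.eval x := by rw [hqf]; simp
          exact nonneg_of_mul (h2 ▸ hpos x hx) (hqpos x)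
        have hqsos : IsSumSq q := by
          rw [hqdef]; exact (mySq _).add (myC he.le)
        rw [hqf]
        exact InM.sosMul hqsos (ih h hdh hhnn)

/-- Powers–Reznick representation applied to `f''`: if `f` is a univariate polynomial
of degree at most `2d` whose second derivative is nonnegative on `[a,b]`, then
`f'' = σ₀ + (x-a)σ₁ + (b-x)σ₂` for sum-of-squares polynomials `σ₀, σ₁, σ₂`. -/
theorem second_derivative_interval_sos_representation
    (d : ℕ) (f : Polynomial ℝ) (hdeg : f.natDegree ≤ 2 * d)
    (a b : ℝ) (hab : a < b)
    (hpos : ∀ x ∈ Set.Icc a b, 0 ≤ (derivative (derivative f)).eval x) :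
    ∃ σ₀ σ₁ σ₂ : Polynomial ℝ, IsSumSq σ₀ ∧ IsSumSq σ₁ ∧ IsSumSq σ₂ ∧
      derivative (derivative f) = σ₀ + (X - C a) * σ₁ + (C b - X) * σ₂ := by
  exact key a b hab (derivative (derivative f)).natDegree (derivative (derivative f)) le_rfl hpos
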